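/- For any α ≥ 1 and d ≥ 1, ∑_{n ≥ 1} (d(n)/n^{3/4}) · min(1, d/(α² n)) ≪ α^{−1/2} d^{1/4} log(2d), with an absolute implied constant. -/

import Mathlib

open Finset

private lemma aux_rpow_pow (x : ℝ) (hx : 0 ≤ x) (k : ℕ) :
    (x ^ ((1:ℝ)/4)) ^ k = x ^ ((k:ℝ)/4) := by
  rw [← Real.rpow_natCast (x ^ ((1:ℝ)/4)) k, ← Real.rpow_mul hx]
  ring_nf

private lemma aux_step34 (x : ℝ) (hx : 0 ≤ x) :
    (x+1) ^ (-(3:ℝ)/4) ≤ 4 * ((x+1) ^ ((1:ℝ)/4) - x ^ ((1:ℝ)/4)) := by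
  have hx1 : (0:ℝ) < x + 1 := by linarith
  set u := (x+1) ^ ((1:ℝ)/4) with hu
  set v := x ^ ((1:ℝ)/4) with hv
  have hu4 : u ^ (4:ℕ) = x + 1 := by
    rw [hu, aux_rpow_pow _ hx1.le]; norm_num
  have hv4 : v ^ (4:ℕ) = x := by
    rw [hv, aux_rpow_pow _ hx]; norm_num
  have hup : 0 < u := Real.rpow_pos_of_pos hx1 _
  have hvn : 0 ≤ v := Real.rpow_nonneg hx _
  have huv : v ≤ u := Real.rpow_le_rpow hx (by linarith) (by norm_num)
  have hrw : (x+1) ^ (-(3:ℝ)/4) = (u ^ (3:ℕ))⁻¹ := by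
    rw [hu, aux_rpow_pow _ hx1.le, ← Real.rpow_neg hx1.le]
    norm_num
  rw [hrw, inv_eq_one_div, div_le_iff₀ (by positivity)]
  nlinarith [mul_nonneg (sq_nonneg (u - v)) (show (0:ℝ) ≤ 3*u^2 + 2*u*v + v^2 by positivity), hu4, hv4]

private lemma aux_step74 (x : ℝ) (hx : 1 ≤ x) :
    (x+1) ^ (-(7:ℝ)/4) ≤ (4/3) * (x ^ (-(3:ℝ)/4) - (x+1) ^ (-(3:ℝ)/4)) := by
  have hx0 : (0:ℝ) < x := by linarith
  have hx1 : (0:ℝ) < x + 1 := by linarith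
  set u := (x+1) ^ ((1:ℝ)/4) with hu
  set v := x ^ ((1:ℝ)/4) with hv
  have hu4 : u ^ (4:ℕ) = x + 1 := by rw [hu, aux_rpow_pow _ hx1.le]; norm_num
  have hv4 : v ^ (4:ℕ) = x := by rw [hv, aux_rpow_pow _ hx0.le]; norm_num
  have hup : 0 < u := Real.rpow_pos_of_pos hx1 _
  have hvp : 0 < v := Real.rpow_pos_of_pos hx0 _
  have huv : v ≤ u := Real.rpow_le_rpow hx0.le (by linarith) (by norm_num)
  have hrw1 : (x+1) ^ (-(7:ℝ)/4) = (u ^ (7:ℕ))⁻¹ := by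
    rw [hu, aux_rpow_pow _ hx1.le, ← Real.rpow_neg hx1.le]; norm_num
  have hrw2 : (x+1) ^ (-(3:ℝ)/4) = (u ^ (3:ℕ))⁻¹ := by
    rw [hu, aux_rpow_pow _ hx1.le, ← Real.rpow_neg hx1.le]; norm_num
  have hrw3 : x ^ (-(3:ℝ)/4) = (v ^ (3:ℕ))⁻¹ := by
    rw [hv, aux_rpow_pow _ hx0.le, ← Real.rpow_neg hx0.le]; norm_num
  rw [hrw1, hrw2, hrw3]
  have h : u ^ 4 = v ^ 4 + 1 := by rw [hu4, hv4]
  have amgm : 0 ≤ 4*u^7 + 3*v^7 - 7*u^4*v^3 := by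
    nlinarith [mul_nonneg (sq_nonneg (u - v))
      (show (0:ℝ) ≤ 4*u^5 + 8*u^4*v + 12*u^3*v^2 + 9*u^2*v^3 + 6*u*v^4 + 3*v^5 by positivity)]
  have h3 : u^4*v^3 = v^7 + v^3 := by rw [h]; ring
  have key : 0 ≤ 4*u^7 - 4*v^7 - 7*v^3 := by linarith
  have expand : (4:ℝ)/3 * ((v ^ 3)⁻¹ - (u ^ 3)⁻¹) - (u ^ 7)⁻¹
      = (4*u^7 - 4*u^4*v^3 - 3*v^3) / (3*u^7*v^3) := by
    field_simp
  have : 0 ≤ (4*u^7 - 4*u^4*v^3 - 3*v^3) / (3*u^7*v^3) :=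
    div_nonneg (by linarith) (by positivity)
  linarith [expand ▸ this]

private lemma aux_partial34 (N : ℕ) :
    ∑ i ∈ range N, ((i:ℝ)+1) ^ (-(3:ℝ)/4) ≤ 4 * (N:ℝ) ^ ((1:ℝ)/4) := by
  induction N with
  | zero => simp
  | succ N ih =>
      rw [Finset.sum_range_succ]
      have h := aux_step34 (N:ℝ) (Nat.cast_nonneg N)
      push_cast
      linarith

private lemma aux_partial74 (N : ℕ) (hN : 1 ≤ N) (M : ℕ) :
    ∑ i ∈ range M, (((N+i:ℕ):ℝ)+1) ^ (-(7:ℝ)/4)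
      ≤ (4/3) * (N:ℝ) ^ (-(3:ℝ)/4) - (4/3) * (((N+M:ℕ):ℝ)) ^ (-(3:ℝ)/4) := by
  induction M with
  | zero => simp
  | succ M ih =>
      rw [Finset.sum_range_succ]
      have h := aux_step74 ((N:ℝ)+(M:ℝ)) (by
        have : (1:ℝ) ≤ (N:ℝ) := by exact_mod_cast hN
        have : (0:ℝ) ≤ (M:ℝ) := Nat.cast_nonneg M
        linarith)
      push_cast
      push_cast at ih h
      rw [show (N:ℝ) + ((M:ℝ) + 1) = ((N:ℝ) + (M:ℝ)) + 1 from by ring]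
      linarith

private lemma aux_harmonic (N : ℕ) :
    ∑ i ∈ range N, ((i:ℝ)+1)⁻¹ ≤ 1 + Real.log N := by
  have h1 : ∑ i ∈ range N, ((i:ℝ)+1)⁻¹ = ((harmonic N : ℚ) : ℝ) := by
    rw [harmonic]
    push_cast
    rfl
  rw [h1]
  exact harmonic_le_one_add_log N

private lemma aux_partial74' (M : ℕ) :
    ∑ i ∈ range M, ((i:ℝ)+1) ^ (-(7:ℝ)/4) ≤ 3 := by
  cases M with
  | zero => simp
  | succ M =>
      rw [Finset.sum_range_succ']
      have h := aux_partial74 1 le_rfl M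
      have h2 : (0:ℝ) ≤ (4/3) * (((1+M:ℕ):ℝ)) ^ (-(3:ℝ)/4) := by positivity
      push_cast at h2
      norm_num at h2
      have h3 : ∑ i ∈ range M, (((i:ℕ):ℝ)+1+1) ^ (-(7:ℝ)/4)
          = ∑ i ∈ range M, (((1+i:ℕ):ℝ)+1) ^ (-(7:ℝ)/4) := by
        refine Finset.sum_congr rfl fun i _ => ?_
        push_cast
        ring_nf
      push_cast
      rw [h3]
      push_cast at h ⊢
      norm_num at h ⊢
      linarith

open scoped ENNReal in
private lemma aux_ofReal_tsum_le {f : ℕ → ℝ} {c : ℝ} (hf : ∀ n, 0 ≤ f n)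
    (h : ∀ M, ∑ i ∈ range M, f i ≤ c) :
    ∑' i : ℕ, ENNReal.ofReal (f i) ≤ ENNReal.ofReal c := by
  refine ENNReal.tsum_le_of_sum_range_le fun M => ?_
  rw [← ENNReal.ofReal_sum_of_nonneg fun i _ => hf i]
  exact ENNReal.ofReal_le_ofReal (h M)

open scoped ENNReal in
private lemma aux_shift (f : ℕ → ℝ≥0∞) (K : ℕ) (hf : ∀ n, n < K → f n = 0) :
    ∑' n, f n = ∑' n, f (K + n) := by
  refine (Function.Injective.tsum_eq (add_right_injective K) fun n hn => ?_).symm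
  rcases le_or_gt K n with h | h
  · refine ⟨n - K, ?_⟩
    show K + (n - K) = n
    omega
  · exact absurd (hf n h) hn

open scoped ENNReal in
private lemma aux_rearrange (g : ℕ → ℝ≥0∞) (hg : g 0 = 0) :
    ∑' n : ℕ, (n.divisors.card : ℝ≥0∞) * g n = ∑' p : ℕ × ℕ, g (p.1 * p.2) := by
  rw [← ENNReal.tsum_fiberwise (fun p : ℕ × ℕ => g (p.1 * p.2)) (fun p => p.1 * p.2)]
  refine tsum_congr fun n => ?_
  have h1 : ∀ b : (fun p : ℕ × ℕ => p.1 * p.2) ⁻¹' {n}, g (b.val.1 * b.val.2) = g n := by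
    rintro ⟨⟨a, b⟩, hb⟩
    simp only [Set.mem_preimage, Set.mem_singleton_iff] at hb
    simp [hb]
  rw [tsum_congr h1]
  rcases eq_or_ne n 0 with rfl | hn
  · simp [hg]
  · have hset : (fun p : ℕ × ℕ => p.1 * p.2) ⁻¹' {n} = ↑(n.divisorsAntidiagonal) := by
      ext p
      simp [Nat.mem_divisorsAntidiagonal, hn]
    rw [hset, Finset.tsum_subtype' n.divisorsAntidiagonal (fun _ => g n), Finset.sum_const,
      nsmul_eq_mul, ← Nat.map_div_right_divisors, Finset.card_map]

open scoped ENNReal in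
private lemma aux_tailE (N : ℕ) (hN : 1 ≤ N) :
    ∑' i : ℕ, ENNReal.ofReal ((((N+i:ℕ):ℝ)+1) ^ (-(7:ℝ)/4))
      ≤ ENNReal.ofReal ((4/3) * (N:ℝ) ^ (-(3:ℝ)/4)) := by
  refine aux_ofReal_tsum_le (fun n => Real.rpow_nonneg (by positivity) _) (fun M => ?_)
  have h := aux_partial74 N hN M
  have h2 : (0:ℝ) ≤ (4/3) * (((N+M:ℕ):ℝ)) ^ (-(3:ℝ)/4) := by positivity
  linarith

open scoped ENNReal in
private lemma aux_totalE :
    ∑' i : ℕ, ENNReal.ofReal (((i:ℝ)+1) ^ (-(7:ℝ)/4)) ≤ ENNReal.ofReal 3 :=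
  aux_ofReal_tsum_le (fun n => Real.rpow_nonneg (by positivity) _) aux_partial74'

private lemma aux_neg34 {s k : ℝ} (hs : 0 < s) (hk : 0 < k) (h : s ≤ 2*k) :
    k ^ (-(3:ℝ)/4) ≤ 2 * s ^ (-(3:ℝ)/4) := by
  have hkp : (0:ℝ) < k ^ ((3:ℝ)/4) := Real.rpow_pos_of_pos hk _
  have hsp : (0:ℝ) < s ^ ((3:ℝ)/4) := Real.rpow_pos_of_pos hs _
  have h1 : s ^ ((3:ℝ)/4) ≤ 2 * k ^ ((3:ℝ)/4) := by
    calc s ^ ((3:ℝ)/4) ≤ (2*k) ^ ((3:ℝ)/4) :=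
          Real.rpow_le_rpow hs.le h (by norm_num)
      _ = 2 ^ ((3:ℝ)/4) * k ^ ((3:ℝ)/4) := Real.mul_rpow (by norm_num) hk.le
      _ ≤ 2 * k ^ ((3:ℝ)/4) := by
          have h2 : (2:ℝ) ^ ((3:ℝ)/4) ≤ 2 ^ (1:ℝ) :=
            Real.rpow_le_rpow_of_exponent_le one_le_two (by norm_num)
          rw [Real.rpow_one] at h2
          nlinarith
  rw [neg_div, Real.rpow_neg hk.le, Real.rpow_neg hs.le]
  rw [inv_eq_one_div, inv_eq_one_div, mul_one_div, div_le_div_iff₀ hkp hsp]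
  nlinarith

private lemma aux_DD (D : ℝ) (hD : 0 < D) : D * D ^ (-(3:ℝ)/4) = D ^ ((1:ℝ)/4) := by
  nth_rewrite 1 [← Real.rpow_one D]
  rw [← Real.rpow_add hD]
  norm_num

private lemma aux_aa (a : ℝ) (ha : 0 < a) : a ^ (-(7:ℝ)/4) * a ^ ((3:ℝ)/4) = a⁻¹ := by
  rw [← Real.rpow_add ha]
  norm_num
  exact Real.rpow_neg_one a

private lemma aux_div_rpow_neg34 (D a : ℝ) (hD : 0 < D) (ha : 0 < a) :
    (D/a) ^ (-(3:ℝ)/4) = D ^ (-(3:ℝ)/4) * a ^ ((3:ℝ)/4) := by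
  rw [div_eq_mul_inv, Real.mul_rpow hD.le (by positivity), Real.inv_rpow ha.le,
    neg_div, Real.rpow_neg ha.le, inv_inv]

set_option maxHeartbeats 1000000 in
open scoped ENNReal in
private lemma aux_inner (D : ℝ) (hD : 0 < D) (a : ℕ) (ha : 1 ≤ a) :
    ∑' b : ℕ, ENNReal.ofReal (((a*b : ℕ):ℝ) ^ (-(3:ℝ)/4) * min 1 (D / ((a*b : ℕ):ℝ)))
      ≤ ENNReal.ofReal (if (a:ℝ) ≤ D then 7 * D ^ ((1:ℝ)/4) / a
          else 3 * D * (a:ℝ) ^ (-(7:ℝ)/4)) := by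
  have ha0 : (0:ℝ) < a := by exact_mod_cast ha
  rw [aux_shift _ 1 (by
    intro n hn
    interval_cases n
    norm_num [Real.zero_rpow])]
  have hm0 : ∀ b : ℕ, (0:ℝ) < ((a*(1+b) : ℕ):ℝ) := by
    intro b
    have : 0 < a*(1+b) := by positivity
    exact_mod_cast this
  have hmcast : ∀ b : ℕ, ((a*(1+b) : ℕ):ℝ) = (a:ℝ) * ((b:ℝ)+1) := by
    intro b; push_cast; ring
  have hpow3 : ∀ b : ℕ, ((a*(1+b) : ℕ):ℝ) ^ (-(3:ℝ)/4)
      = (a:ℝ) ^ (-(3:ℝ)/4) * ((b:ℝ)+1) ^ (-(3:ℝ)/4) := by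
    intro b
    rw [hmcast b, Real.mul_rpow ha0.le (by positivity)]
  have hpow7 : ∀ b : ℕ, ((a*(1+b) : ℕ):ℝ) ^ (-(3:ℝ)/4) * (D / ((a*(1+b) : ℕ):ℝ))
      = D * ((a:ℝ) ^ (-(7:ℝ)/4) * ((b:ℝ)+1) ^ (-(7:ℝ)/4)) := by
    intro b
    have h1 : D / ((a*(1+b) : ℕ):ℝ) = D * ((a*(1+b) : ℕ):ℝ) ^ (-(1:ℝ)) := by
      rw [Real.rpow_neg_one, div_eq_mul_inv]
    have h2 : ((a*(1+b) : ℕ):ℝ) ^ (-(1:ℝ)) = (a:ℝ) ^ (-(1:ℝ)) * ((b:ℝ)+1) ^ (-(1:ℝ)) := by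
      rw [hmcast b, Real.mul_rpow ha0.le (by positivity)]
    have e1 : (a:ℝ) ^ (-(3:ℝ)/4) * (a:ℝ) ^ (-(1:ℝ)) = (a:ℝ) ^ (-(7:ℝ)/4) := by
      rw [← Real.rpow_add ha0]; norm_num
    have e2 : ((b:ℝ)+1) ^ (-(3:ℝ)/4) * ((b:ℝ)+1) ^ (-(1:ℝ)) = ((b:ℝ)+1) ^ (-(7:ℝ)/4) := by
      rw [← Real.rpow_add (by positivity : (0:ℝ) < (b:ℝ)+1)]; norm_num
    rw [h1, h2, hpow3 b]
    calc (a:ℝ) ^ (-(3:ℝ)/4) * ((b:ℝ)+1) ^ (-(3:ℝ)/4) * (D * ((a:ℝ) ^ (-(1:ℝ)) * ((b:ℝ)+1) ^ (-(1:ℝ))))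
        = D * (((a:ℝ) ^ (-(3:ℝ)/4) * (a:ℝ) ^ (-(1:ℝ))) * (((b:ℝ)+1) ^ (-(3:ℝ)/4) * ((b:ℝ)+1) ^ (-(1:ℝ)))) := by
          ring
      _ = D * ((a:ℝ) ^ (-(7:ℝ)/4) * ((b:ℝ)+1) ^ (-(7:ℝ)/4)) := by rw [e1, e2]
  split_ifs with hcase
  · -- case a ≤ D
    set t : ℝ := D / a with ht
    have ht1 : 1 ≤ t := (one_le_div ha0).mpr hcase
    have ht0 : 0 < t := lt_of_lt_of_le one_pos ht1
    set K : ℕ := ⌊t⌋₊ with hK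
    have hK1 : 1 ≤ K := Nat.le_floor (by exact_mod_cast ht1)
    have hK0 : (0:ℝ) < K := by exact_mod_cast hK1
    have hKt : (K:ℝ) ≤ t := Nat.floor_le ht0.le
    have htK : t < (K:ℝ) + 1 := Nat.lt_floor_add_one t
    have ht2K : t ≤ 2*(K:ℝ) := by
      have : (1:ℝ) ≤ (K:ℝ) := by exact_mod_cast hK1
      linarith
    set A : ℕ → ℝ := fun b =>
      if (b:ℝ)+1 ≤ t then (a:ℝ) ^ (-(3:ℝ)/4) * ((b:ℝ)+1) ^ (-(3:ℝ)/4) else 0 with hA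
    set B : ℕ → ℝ := fun b =>
      if (b:ℝ)+1 ≤ t then 0 else D * ((a:ℝ) ^ (-(7:ℝ)/4) * ((b:ℝ)+1) ^ (-(7:ℝ)/4)) with hB
    have hAnn : ∀ b, 0 ≤ A b := by
      intro b; rw [hA]; dsimp only; split
      · positivity
      · exact le_rfl
    have hpoint : ∀ b : ℕ,
        ENNReal.ofReal (((a*(1+b) : ℕ):ℝ) ^ (-(3:ℝ)/4) * min 1 (D / ((a*(1+b) : ℕ):ℝ)))
          ≤ ENNReal.ofReal (A b) + ENNReal.ofReal (B b) := by
      intro b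
      by_cases hb : (b:ℝ)+1 ≤ t
      · have h2 : ((a*(1+b) : ℕ):ℝ) ^ (-(3:ℝ)/4) * min 1 (D / ((a*(1+b) : ℕ):ℝ)) ≤ A b := by
          rw [hA]; dsimp only; rw [if_pos hb, ← hpow3 b]
          have h3 := Real.rpow_nonneg (hm0 b).le (-(3:ℝ)/4)
          nlinarith [min_le_left (1:ℝ) (D / ((a*(1+b) : ℕ):ℝ))]
        calc _ ≤ ENNReal.ofReal (A b) := ENNReal.ofReal_le_ofReal h2
          _ ≤ _ := le_self_add
      · have h2 : ((a*(1+b) : ℕ):ℝ) ^ (-(3:ℝ)/4) * min 1 (D / ((a*(1+b) : ℕ):ℝ)) ≤ B b := by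
          rw [hB]; dsimp only; rw [if_neg hb, ← hpow7 b]
          have h3 := Real.rpow_nonneg (hm0 b).le (-(3:ℝ)/4)
          nlinarith [min_le_right (1:ℝ) (D / ((a*(1+b) : ℕ):ℝ))]
        calc _ ≤ ENNReal.ofReal (B b) := ENNReal.ofReal_le_ofReal h2
          _ ≤ _ := le_add_self
    have hAsum : ∑' b : ℕ, ENNReal.ofReal (A b) ≤ ENNReal.ofReal (4 * D ^ ((1:ℝ)/4) / a) := by
      have hvanish : ∀ b ∉ Finset.range K, ENNReal.ofReal (A b) = 0 := by
        intro b hb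
        have hbK : K ≤ b := by simpa using hb
        have hnot : ¬ ((b:ℝ)+1 ≤ t) := by
          push_neg
          have : (K:ℝ) ≤ (b:ℝ) := by exact_mod_cast hbK
          linarith
        rw [hA]; dsimp only; rw [if_neg hnot, ENNReal.ofReal_zero]
      rw [tsum_eq_sum hvanish, ← ENNReal.ofReal_sum_of_nonneg (fun i _ => hAnn i)]
      apply ENNReal.ofReal_le_ofReal
      have hstep : ∑ i ∈ Finset.range K, A i
          = (a:ℝ) ^ (-(3:ℝ)/4) * ∑ i ∈ Finset.range K, ((i:ℝ)+1) ^ (-(3:ℝ)/4) := by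
        rw [Finset.mul_sum]
        refine Finset.sum_congr rfl fun i hi => ?_
        have hiK : i < K := Finset.mem_range.mp hi
        have hit : (i:ℝ)+1 ≤ t := by
          have h1 : (i:ℝ)+1 ≤ (K:ℝ) := by exact_mod_cast Nat.succ_le_of_lt hiK
          linarith
        rw [hA]; dsimp only; rw [if_pos hit]
      rw [hstep]
      have h34 := aux_partial34 K
      have hK14 : (K:ℝ) ^ ((1:ℝ)/4) ≤ t ^ ((1:ℝ)/4) := Real.rpow_le_rpow hK0.le hKt (by norm_num)
      have hann : (0:ℝ) ≤ (a:ℝ) ^ (-(3:ℝ)/4) := Real.rpow_nonneg ha0.le _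
      have halg : (a:ℝ) ^ (-(3:ℝ)/4) * (4 * t ^ ((1:ℝ)/4)) = 4 * D ^ ((1:ℝ)/4) / a := by
        rw [ht, Real.div_rpow hD.le ha0.le, neg_div, Real.rpow_neg ha0.le]
        have hsplit : (a:ℝ) ^ ((3:ℝ)/4) * (a:ℝ) ^ ((1:ℝ)/4) = a := by
          rw [← Real.rpow_add ha0]; norm_num
        have hp1 : (0:ℝ) < (a:ℝ) ^ ((3:ℝ)/4) := Real.rpow_pos_of_pos ha0 _
        have hp2 : (0:ℝ) < (a:ℝ) ^ ((1:ℝ)/4) := Real.rpow_pos_of_pos ha0 _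
        field_simp
        nlinarith [hsplit]
      calc (a:ℝ) ^ (-(3:ℝ)/4) * ∑ i ∈ Finset.range K, ((i:ℝ)+1) ^ (-(3:ℝ)/4)
          ≤ (a:ℝ) ^ (-(3:ℝ)/4) * (4 * (K:ℝ) ^ ((1:ℝ)/4)) := by nlinarith
        _ ≤ (a:ℝ) ^ (-(3:ℝ)/4) * (4 * t ^ ((1:ℝ)/4)) := by nlinarith
        _ = 4 * D ^ ((1:ℝ)/4) / a := halg
    have hBsum : ∑' b : ℕ, ENNReal.ofReal (B b)
        ≤ ENNReal.ofReal (8/3 * D ^ ((1:ℝ)/4) / a) := by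
      rw [aux_shift _ K (by
        intro b hbK
        have h1 : (b:ℝ)+1 ≤ t := by
          have h0 : (b:ℝ)+1 ≤ (K:ℝ) := by exact_mod_cast Nat.succ_le_of_lt hbK
          linarith
        rw [hB]; dsimp only; rw [if_pos h1, ENNReal.ofReal_zero])]
      have hcongr : ∀ i : ℕ, ENNReal.ofReal (B (K + i))
          = ENNReal.ofReal (D * (a:ℝ) ^ (-(7:ℝ)/4))
            * ENNReal.ofReal ((((K+i:ℕ):ℝ)+1) ^ (-(7:ℝ)/4)) := by
        intro i
        have h1 : ¬ ((((K+i:ℕ)):ℝ)+1 ≤ t) := by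
          push_cast
          push_neg
          have h0 : (0:ℝ) ≤ (i:ℝ) := Nat.cast_nonneg i
          linarith
        have h1' : ¬ (((K+i:ℕ):ℝ)+1 ≤ t) := h1
        rw [hB]; dsimp only; rw [if_neg h1', ← ENNReal.ofReal_mul (by positivity)]
        congr 1
        ring
      rw [tsum_congr hcongr, ENNReal.tsum_mul_left]
      have hreal : D * (a:ℝ) ^ (-(7:ℝ)/4) * ((4/3) * (K:ℝ) ^ (-(3:ℝ)/4))
          ≤ 8/3 * D ^ ((1:ℝ)/4) / a := by
        have hneg := aux_neg34 ht0 hK0 ht2K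
        have htd : t ^ (-(3:ℝ)/4) = D ^ (-(3:ℝ)/4) * (a:ℝ) ^ ((3:ℝ)/4) :=
          aux_div_rpow_neg34 D a hD ha0
        have e1 := aux_DD D hD
        have e2 := aux_aa (a:ℝ) ha0
        have hDa : (0:ℝ) ≤ D * (a:ℝ) ^ (-(7:ℝ)/4) := by positivity
        have step2 : D * (a:ℝ) ^ (-(7:ℝ)/4) * ((8/3) * t ^ (-(3:ℝ)/4))
            = 8/3 * D ^ ((1:ℝ)/4) / a := by
          rw [htd]
          calc D * (a:ℝ)^(-(7:ℝ)/4) * ((8/3) * (D^(-(3:ℝ)/4) * (a:ℝ)^((3:ℝ)/4)))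
              = (8/3) * ((D * D^(-(3:ℝ)/4)) * ((a:ℝ)^(-(7:ℝ)/4) * (a:ℝ)^((3:ℝ)/4))) := by ring
            _ = (8/3) * (D^((1:ℝ)/4) * (a:ℝ)⁻¹) := by rw [e1, e2]
            _ = 8/3 * D ^ ((1:ℝ)/4) / a := by rw [div_eq_mul_inv]; ring
        have m1 : D * (a:ℝ) ^ (-(7:ℝ)/4) * ((4/3) * (K:ℝ) ^ (-(3:ℝ)/4))
            ≤ D * (a:ℝ) ^ (-(7:ℝ)/4) * ((4/3) * (2 * t ^ (-(3:ℝ)/4))) := by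
          apply mul_le_mul_of_nonneg_left _ hDa
          linarith
        have m2 : D * (a:ℝ) ^ (-(7:ℝ)/4) * ((4/3) * (2 * t ^ (-(3:ℝ)/4)))
            = D * (a:ℝ) ^ (-(7:ℝ)/4) * ((8/3) * t ^ (-(3:ℝ)/4)) := by ring
        linarith [step2, m1, m2.le, m2.ge]
      calc ENNReal.ofReal (D * (a:ℝ) ^ (-(7:ℝ)/4))
            * ∑' i : ℕ, ENNReal.ofReal ((((K+i:ℕ):ℝ)+1) ^ (-(7:ℝ)/4))
          ≤ ENNReal.ofReal (D * (a:ℝ) ^ (-(7:ℝ)/4))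
            * ENNReal.ofReal ((4/3) * (K:ℝ) ^ (-(3:ℝ)/4)) := mul_le_mul_right (aux_tailE K hK1) _
        _ = ENNReal.ofReal (D * (a:ℝ) ^ (-(7:ℝ)/4) * ((4/3) * (K:ℝ) ^ (-(3:ℝ)/4))) :=
            (ENNReal.ofReal_mul (by positivity)).symm
        _ ≤ ENNReal.ofReal (8/3 * D ^ ((1:ℝ)/4) / a) := ENNReal.ofReal_le_ofReal hreal
    calc ∑' b : ℕ, ENNReal.ofReal (((a*(1+b) : ℕ):ℝ) ^ (-(3:ℝ)/4) * min 1 (D / ((a*(1+b) : ℕ):ℝ)))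
        ≤ ∑' b : ℕ, (ENNReal.ofReal (A b) + ENNReal.ofReal (B b)) := ENNReal.tsum_le_tsum hpoint
      _ = (∑' b : ℕ, ENNReal.ofReal (A b)) + ∑' b : ℕ, ENNReal.ofReal (B b) := ENNReal.tsum_add
      _ ≤ ENNReal.ofReal (4 * D ^ ((1:ℝ)/4) / a) + ENNReal.ofReal (8/3 * D ^ ((1:ℝ)/4) / a) :=
          add_le_add hAsum hBsum
      _ = ENNReal.ofReal (4 * D ^ ((1:ℝ)/4) / a + 8/3 * D ^ ((1:ℝ)/4) / a) :=
          (ENNReal.ofReal_add (by positivity) (by positivity)).symm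
      _ ≤ ENNReal.ofReal (7 * D ^ ((1:ℝ)/4) / a) := by
          apply ENNReal.ofReal_le_ofReal
          have h0 : (0:ℝ) ≤ D ^ ((1:ℝ)/4) / a := by positivity
          have e : 4 * D ^ ((1:ℝ)/4) / a + 8/3 * D ^ ((1:ℝ)/4) / a
              = 20/3 * (D ^ ((1:ℝ)/4) / a) := by ring
          have e2 : 7 * D ^ ((1:ℝ)/4) / a = 7 * (D ^ ((1:ℝ)/4) / a) := by ring
          rw [e, e2]
          linarith
  · -- case D < a
    have hpoint : ∀ b : ℕ,
        ENNReal.ofReal (((a*(1+b) : ℕ):ℝ) ^ (-(3:ℝ)/4) * min 1 (D / ((a*(1+b) : ℕ):ℝ)))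
          ≤ ENNReal.ofReal (D * (a:ℝ) ^ (-(7:ℝ)/4))
            * ENNReal.ofReal (((b:ℝ)+1) ^ (-(7:ℝ)/4)) := by
      intro b
      rw [← ENNReal.ofReal_mul (by positivity)]
      apply ENNReal.ofReal_le_ofReal
      have h1 : min 1 (D / ((a*(1+b) : ℕ):ℝ)) ≤ D / ((a*(1+b) : ℕ):ℝ) := min_le_right _ _
      have h2 := Real.rpow_nonneg (hm0 b).le (-(3:ℝ)/4)
      calc ((a*(1+b) : ℕ):ℝ) ^ (-(3:ℝ)/4) * min 1 (D / ((a*(1+b) : ℕ):ℝ))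
          ≤ ((a*(1+b) : ℕ):ℝ) ^ (-(3:ℝ)/4) * (D / ((a*(1+b) : ℕ):ℝ)) := by nlinarith
        _ = D * ((a:ℝ) ^ (-(7:ℝ)/4) * ((b:ℝ)+1) ^ (-(7:ℝ)/4)) := hpow7 b
        _ = D * (a:ℝ) ^ (-(7:ℝ)/4) * ((b:ℝ)+1) ^ (-(7:ℝ)/4) := by ring
    calc ∑' b : ℕ, ENNReal.ofReal (((a*(1+b) : ℕ):ℝ) ^ (-(3:ℝ)/4) * min 1 (D / ((a*(1+b) : ℕ):ℝ)))
        ≤ ∑' b : ℕ, ENNReal.ofReal (D * (a:ℝ) ^ (-(7:ℝ)/4))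
            * ENNReal.ofReal (((b:ℝ)+1) ^ (-(7:ℝ)/4)) := ENNReal.tsum_le_tsum hpoint
      _ = ENNReal.ofReal (D * (a:ℝ) ^ (-(7:ℝ)/4))
            * ∑' b : ℕ, ENNReal.ofReal (((b:ℝ)+1) ^ (-(7:ℝ)/4)) := ENNReal.tsum_mul_left
      _ ≤ ENNReal.ofReal (D * (a:ℝ) ^ (-(7:ℝ)/4)) * ENNReal.ofReal 3 :=
          mul_le_mul_right aux_totalE _
      _ = ENNReal.ofReal (D * (a:ℝ) ^ (-(7:ℝ)/4) * 3) := (ENNReal.ofReal_mul (by positivity)).symm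
      _ ≤ ENNReal.ofReal (3 * D * (a:ℝ) ^ (-(7:ℝ)/4)) :=
          ENNReal.ofReal_le_ofReal (le_of_eq (by ring))

set_option maxHeartbeats 1000000 in
open scoped ENNReal in
private lemma aux_outer (D L : ℝ) (hD : 0 < D) (hL1 : Real.log 2 ≤ L) (hL2 : Real.log D ≤ L) :
    ∑' a : ℕ, (if a = 0 then 0 else
        ENNReal.ofReal (if (a:ℝ) ≤ D then 7 * D ^ ((1:ℝ)/4) / a
          else 3 * D * (a:ℝ) ^ (-(7:ℝ)/4)))
      ≤ ENNReal.ofReal (50 * D ^ ((1:ℝ)/4) * L) := by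
  have hlog2 : (0.6931:ℝ) < Real.log 2 := by
    have := Real.log_two_gt_d9
    linarith
  have hL0 : (0:ℝ) < L := by linarith
  set N : ℕ := ⌊D⌋₊ with hN
  have hDN : D < (N:ℝ) + 1 := Nat.lt_floor_add_one D
  set A : ℕ → ℝ := fun a => if 1 ≤ a ∧ a ≤ N then 7 * D ^ ((1:ℝ)/4) / a else 0 with hA
  set B : ℕ → ℝ := fun a => if N+1 ≤ a then 3 * D * (a:ℝ) ^ (-(7:ℝ)/4) else 0 with hB
  have hAnn : ∀ a, 0 ≤ A a := by
    intro a; rw [hA]; dsimp only; split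
    · positivity
    · exact le_rfl
  have hpoint : ∀ a : ℕ, (if a = 0 then 0 else
      ENNReal.ofReal (if (a:ℝ) ≤ D then 7 * D ^ ((1:ℝ)/4) / a
        else 3 * D * (a:ℝ) ^ (-(7:ℝ)/4)))
      ≤ ENNReal.ofReal (A a) + ENNReal.ofReal (B a) := by
    intro a
    rcases eq_or_ne a 0 with rfl | ha
    · simp
    rw [if_neg ha]
    have ha1 : 1 ≤ a := Nat.one_le_iff_ne_zero.mpr ha
    by_cases hcase : (a:ℝ) ≤ D
    · have haN : a ≤ N := Nat.le_floor hcase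
      rw [if_pos hcase]
      have : A a = 7 * D ^ ((1:ℝ)/4) / a := by
        rw [hA]; dsimp only; rw [if_pos ⟨ha1, haN⟩]
      rw [← this]
      exact le_self_add
    · have haN : N + 1 ≤ a := by
        have : N < a := (Nat.floor_lt hD.le).mpr (lt_of_not_ge hcase)
        omega
      rw [if_neg hcase]
      have : B a = 3 * D * (a:ℝ) ^ (-(7:ℝ)/4) := by
        rw [hB]; dsimp only; rw [if_pos haN]
      rw [← this]
      exact le_add_self
  have hAsum : ∑' a : ℕ, ENNReal.ofReal (A a) ≤ ENNReal.ofReal (18 * D ^ ((1:ℝ)/4) * L) := by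
    have hvanish : ∀ a ∉ Finset.range (N+1), ENNReal.ofReal (A a) = 0 := by
      intro a haa
      have h1 : N + 1 ≤ a := by simpa using haa
      have : ¬ (1 ≤ a ∧ a ≤ N) := by omega
      rw [hA]; dsimp only; rw [if_neg this, ENNReal.ofReal_zero]
    rw [tsum_eq_sum hvanish, ← ENNReal.ofReal_sum_of_nonneg (fun i _ => hAnn i)]
    apply ENNReal.ofReal_le_ofReal
    rw [Finset.sum_range_succ']
    have hA0 : A 0 = 0 := by
      rw [hA]; dsimp only; rw [if_neg (by omega)]
    rw [hA0, add_zero]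
    have hstep : ∑ i ∈ Finset.range N, A (i+1)
        = 7 * D ^ ((1:ℝ)/4) * ∑ i ∈ Finset.range N, ((i:ℝ)+1)⁻¹ := by
      rw [Finset.mul_sum]
      refine Finset.sum_congr rfl fun i hi => ?_
      have hiN : i < N := Finset.mem_range.mp hi
      have : 1 ≤ i+1 ∧ i+1 ≤ N := ⟨by omega, by omega⟩
      rw [hA]; dsimp only; rw [if_pos this]
      push_cast
      rw [div_eq_mul_inv]
    rw [hstep]
    rcases Nat.eq_zero_or_pos N with hN0 | hN1
    · rw [hN0]
      simp
      positivity
    · have hharm := aux_harmonic N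
      have hlogN : Real.log N ≤ Real.log D := by
        apply Real.log_le_log (by exact_mod_cast hN1)
        exact Nat.floor_le hD.le
      have h1L : (1:ℝ) ≤ 1.45 * L := by nlinarith
      have hsum_le : ∑ i ∈ Finset.range N, ((i:ℝ)+1)⁻¹ ≤ 2.45 * L := by
        calc ∑ i ∈ Finset.range N, ((i:ℝ)+1)⁻¹ ≤ 1 + Real.log N := hharm
          _ ≤ 1.45 * L + L := by linarith
          _ = 2.45 * L := by ring
      have hd14 : (0:ℝ) ≤ 7 * D ^ ((1:ℝ)/4) := by positivity
      calc 7 * D ^ ((1:ℝ)/4) * ∑ i ∈ Finset.range N, ((i:ℝ)+1)⁻¹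
          ≤ 7 * D ^ ((1:ℝ)/4) * (2.45 * L) := mul_le_mul_of_nonneg_left hsum_le hd14
        _ ≤ 18 * D ^ ((1:ℝ)/4) * L := by
            nlinarith [mul_nonneg (Real.rpow_nonneg hD.le ((1:ℝ)/4)) hL0.le]
  have hBsum : ∑' a : ℕ, ENNReal.ofReal (B a) ≤ ENNReal.ofReal (13 * D ^ ((1:ℝ)/4) * L) := by
    rw [aux_shift _ (N+1) (by
      intro b hb
      rw [hB]; dsimp only; rw [if_neg (by omega), ENNReal.ofReal_zero])]
    have hcongr : ∀ i : ℕ, ENNReal.ofReal (B (N+1+i))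
        = ENNReal.ofReal (3*D) * ENNReal.ofReal ((((N+1+i:ℕ)):ℝ) ^ (-(7:ℝ)/4)) := by
      intro i
      rw [hB]; dsimp only; rw [if_pos (by omega), ← ENNReal.ofReal_mul (by positivity)]
    rw [tsum_congr hcongr, ENNReal.tsum_mul_left]
    rcases Nat.eq_zero_or_pos N with hN0 | hN1
    · have hD1 : D < 1 := by
        have h := hDN
        rw [hN0] at h
        push_cast at h
        linarith
      have heq : ∀ i:ℕ, ENNReal.ofReal ((((N+1+i:ℕ)):ℝ) ^ (-(7:ℝ)/4))
          = ENNReal.ofReal (((i:ℝ)+1) ^ (-(7:ℝ)/4)) := by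
        intro i
        rw [hN0]
        congr 2
        push_cast
        ring
      rw [tsum_congr heq]
      have hreal : 3*D*3 ≤ 13 * D ^ ((1:ℝ)/4) * L := by
        have hDD : D ≤ D ^ ((1:ℝ)/4) := by
          have h := Real.rpow_le_rpow_of_exponent_ge hD hD1.le (by norm_num : (1:ℝ)/4 ≤ 1)
          rwa [Real.rpow_one] at h
        nlinarith [Real.rpow_nonneg hD.le ((1:ℝ)/4)]
      calc ENNReal.ofReal (3*D) * ∑' i:ℕ, ENNReal.ofReal (((i:ℝ)+1) ^ (-(7:ℝ)/4))
          ≤ ENNReal.ofReal (3*D) * ENNReal.ofReal 3 := mul_le_mul_right aux_totalE _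
        _ = ENNReal.ofReal (3*D*3) := (ENNReal.ofReal_mul (by positivity)).symm
        _ ≤ ENNReal.ofReal (13 * D ^ ((1:ℝ)/4) * L) := ENNReal.ofReal_le_ofReal hreal
    · have heq : ∀ i:ℕ, ENNReal.ofReal ((((N+1+i:ℕ)):ℝ) ^ (-(7:ℝ)/4))
          = ENNReal.ofReal (((((N+i:ℕ)):ℝ)+1) ^ (-(7:ℝ)/4)) := by
        intro i
        congr 2
        push_cast
        ring
      rw [tsum_congr heq]
      have hN0' : (0:ℝ) < N := by exact_mod_cast hN1
      have hD2N : D ≤ 2*(N:ℝ) := by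
        have h1 : (1:ℝ) ≤ (N:ℝ) := by exact_mod_cast hN1
        linarith
      have hneg := aux_neg34 hD hN0' hD2N
      have hreal : 3*D*((4/3) * (N:ℝ) ^ (-(3:ℝ)/4)) ≤ 13 * D ^ ((1:ℝ)/4) * L := by
        have e := aux_DD D hD
        have m1 : 3*D*((4/3) * (N:ℝ) ^ (-(3:ℝ)/4)) ≤ 3*D*((4/3) * (2 * D ^ (-(3:ℝ)/4))) := by
          apply mul_le_mul_of_nonneg_left _ (by positivity : (0:ℝ) ≤ 3*D)
          linarith
        have m2 : 3*D*((4/3) * (2 * D ^ (-(3:ℝ)/4))) = 8 * (D * D ^ (-(3:ℝ)/4)) := by ring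
        have m3 : (8:ℝ) * D ^ ((1:ℝ)/4) ≤ 13 * D ^ ((1:ℝ)/4) * L := by
          nlinarith [Real.rpow_nonneg hD.le ((1:ℝ)/4)]
        rw [m2, e] at m1
        linarith
      calc ENNReal.ofReal (3*D) * ∑' i:ℕ, ENNReal.ofReal (((((N+i:ℕ)):ℝ)+1) ^ (-(7:ℝ)/4))
          ≤ ENNReal.ofReal (3*D) * ENNReal.ofReal ((4/3) * (N:ℝ) ^ (-(3:ℝ)/4)) :=
            mul_le_mul_right (aux_tailE N hN1) _
        _ = ENNReal.ofReal (3*D*((4/3) * (N:ℝ) ^ (-(3:ℝ)/4))) :=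
            (ENNReal.ofReal_mul (by positivity)).symm
        _ ≤ ENNReal.ofReal (13 * D ^ ((1:ℝ)/4) * L) := ENNReal.ofReal_le_ofReal hreal
  calc ∑' a : ℕ, (if a = 0 then 0 else
        ENNReal.ofReal (if (a:ℝ) ≤ D then 7 * D ^ ((1:ℝ)/4) / a
          else 3 * D * (a:ℝ) ^ (-(7:ℝ)/4)))
      ≤ ∑' a : ℕ, (ENNReal.ofReal (A a) + ENNReal.ofReal (B a)) := ENNReal.tsum_le_tsum hpoint
    _ = (∑' a : ℕ, ENNReal.ofReal (A a)) + ∑' a : ℕ, ENNReal.ofReal (B a) := ENNReal.tsum_add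
    _ ≤ ENNReal.ofReal (18 * D ^ ((1:ℝ)/4) * L) + ENNReal.ofReal (13 * D ^ ((1:ℝ)/4) * L) :=
        add_le_add hAsum hBsum
    _ = ENNReal.ofReal (18 * D ^ ((1:ℝ)/4) * L + 13 * D ^ ((1:ℝ)/4) * L) :=
        (ENNReal.ofReal_add (by positivity) (by positivity)).symm
    _ ≤ ENNReal.ofReal (50 * D ^ ((1:ℝ)/4) * L) := ENNReal.ofReal_le_ofReal (by
        nlinarith [mul_nonneg (Real.rpow_nonneg hD.le ((1:ℝ)/4)) hL0.le])

set_option maxHeartbeats 1000000 in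
open scoped ENNReal in
theorem diagonal_divisor_sum_bound :
    ∃ C > (0 : ℝ), ∀ α : ℝ, 1 ≤ α → ∀ d : ℕ, 1 ≤ d →
      ∑' n : ℕ, (if n = 0 then 0 else
          (n.divisors.card : ℝ) / (n : ℝ) ^ ((3 : ℝ) / 4) *
            min 1 ((d : ℝ) / (α ^ 2 * n)))
        ≤ C * α ^ (-(1 : ℝ) / 2) * (d : ℝ) ^ ((1 : ℝ) / 4) * Real.log (2 * d) := by
  refine ⟨50, by norm_num, ?_⟩
  intro α hα d hd
  have hα0 : (0:ℝ) < α := lt_of_lt_of_le one_pos hα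
  have hα2 : (1:ℝ) ≤ α^2 := by nlinarith
  have hd1 : (1:ℝ) ≤ (d:ℝ) := by exact_mod_cast hd
  set D : ℝ := (d:ℝ) / α^2 with hD
  have hDpos : 0 < D := by positivity
  set L : ℝ := Real.log (2*(d:ℝ)) with hL
  have hL1 : Real.log 2 ≤ L := Real.log_le_log (by norm_num) (by nlinarith)
  have hL2 : Real.log D ≤ L := by
    apply Real.log_le_log hDpos
    have h1 : D ≤ (d:ℝ) := by
      rw [hD]
      exact div_le_self (by linarith) hα2
    linarith
  have hL0 : 0 < L := lt_of_lt_of_le (Real.log_pos one_lt_two) hL1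
  set f : ℕ → ℝ := fun n => if n = 0 then 0 else
      (n.divisors.card : ℝ) / (n : ℝ) ^ ((3 : ℝ) / 4) * min 1 ((d : ℝ) / (α ^ 2 * n)) with hf
  set g : ℕ → ℝ≥0∞ := fun m =>
      ENNReal.ofReal ((m:ℝ) ^ (-(3:ℝ)/4) * min 1 (D / ((m:ℕ):ℝ))) with hg
  have hfnn : ∀ n, 0 ≤ f n := by
    intro n; rw [hf]; dsimp only; split
    · exact le_rfl
    · have h1 : (0:ℝ) ≤ min 1 ((d:ℝ)/(α^2*n)) := le_min zero_le_one (by positivity)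
      positivity
  have hg0 : g 0 = 0 := by
    rw [hg]; dsimp only
    norm_num [Real.zero_rpow]
  have hterm : ∀ n : ℕ, ENNReal.ofReal (f n) = (n.divisors.card : ℝ≥0∞) * g n := by
    intro n
    rcases eq_or_ne n 0 with rfl | hn
    · rw [hf]; dsimp only; rw [if_pos rfl, hg0]
      simp
    · rw [hf, hg]; dsimp only; rw [if_neg hn]
      have hn0 : (0:ℝ) < n := by exact_mod_cast Nat.pos_of_ne_zero hn
      have e1 : (d:ℝ) / (α^2*(n:ℝ)) = D / n := by
        rw [hD, div_div]
      have e2 : (n.divisors.card : ℝ) / (n:ℝ)^((3:ℝ)/4)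
          = (n.divisors.card : ℝ) * (n:ℝ)^(-(3:ℝ)/4) := by
        rw [neg_div, Real.rpow_neg hn0.le, div_eq_mul_inv]
      rw [e1, e2, mul_assoc, ENNReal.ofReal_mul (by positivity), ENNReal.ofReal_natCast]
  have key : ∑' n:ℕ, ENNReal.ofReal (f n) ≤ ENNReal.ofReal (50 * D ^ ((1:ℝ)/4) * L) := by
    calc ∑' n:ℕ, ENNReal.ofReal (f n) = ∑' n:ℕ, (n.divisors.card : ℝ≥0∞) * g n :=
          tsum_congr hterm
      _ = ∑' p : ℕ×ℕ, g (p.1*p.2) := aux_rearrange g hg0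
      _ = ∑' (a:ℕ) (b:ℕ), g (a*b) := ENNReal.tsum_prod'
      _ ≤ ∑' a:ℕ, (if a = 0 then 0 else
            ENNReal.ofReal (if (a:ℝ) ≤ D then 7 * D ^ ((1:ℝ)/4) / a
              else 3 * D * (a:ℝ) ^ (-(7:ℝ)/4))) := by
          refine ENNReal.tsum_le_tsum fun a => ?_
          rcases eq_or_ne a 0 with rfl | ha
          · have : ∀ b:ℕ, g (0*b) = 0 := by
              intro b
              rw [zero_mul, hg0]
            rw [tsum_congr this, tsum_zero]
            exact zero_le
          · rw [if_neg ha]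
            have h := aux_inner D hDpos a (Nat.one_le_iff_ne_zero.mpr ha)
            simpa [hg] using h
      _ ≤ ENNReal.ofReal (50 * D ^ ((1:ℝ)/4) * L) := aux_outer D L hDpos hL1 hL2
  have hRHS : 50 * D ^ ((1:ℝ)/4) * L = 50 * α ^ (-(1:ℝ)/2) * (d:ℝ)^((1:ℝ)/4) * L := by
    rw [hD, Real.div_rpow (Nat.cast_nonneg d) (by positivity)]
    have e3 : (α^2) ^ ((1:ℝ)/4) = α ^ ((1:ℝ)/2) := by
      rw [← Real.rpow_natCast α 2, ← Real.rpow_mul hα0.le]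
      norm_num
    rw [e3, neg_div, Real.rpow_neg hα0.le]
    rw [div_eq_mul_inv]
    ring
  have hne : ∑' n:ℕ, ENNReal.ofReal (f n) ≠ ⊤ := ne_top_of_le_ne_top ENNReal.ofReal_ne_top key
  have hsumm : Summable f := by
    have h2 := ENNReal.summable_toReal hne
    refine h2.congr fun n => ?_
    exact ENNReal.toReal_ofReal (hfnn n)
  have h3 : ENNReal.ofReal (∑' n, f n) ≤ ENNReal.ofReal (50 * D ^ ((1:ℝ)/4) * L) := by
    rw [ENNReal.ofReal_tsum_of_nonneg hfnn hsumm]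
    exact key
  have h4 := (ENNReal.ofReal_le_ofReal_iff (by positivity)).mp h3
  rw [hRHS] at h4
  exact h4
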